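/- Let d ≥ 2. Let β, γ : ℝ → ℝ^d be differentiable on nondegenerate intervals I_β, I_γ with β'(t)₀² − (β'(t)₁² + ⋯ + β'(t)_{d−1}²) = 1 for all t ∈ I_β and γ'(t)₀² − (γ'(t)₁² + ⋯ + γ'(t)_{d−1}²) = 1 for all t ∈ I_γ (well-parametrized timelike curves). Let β*, γ* : ℝ → ℝ^d be differentiable on nondegenerate intervals I, J with timelike derivative at every point, such that β*(I) ⊆ β(I_β) and γ*(J) ⊆ γ(I_γ). Let x < y with [x, y] ⊆ I ∩ J, and let x_β, y_β ∈ I_β and x_γ, y_γ ∈ I_γ satisfy β(x_β) = β*(x), β(y_β) = β*(y), γ(x_γ) = γ*(x), γ(y_γ) = γ*(y). If μ(γ*'(z)) > μ(β*'(z)) for every z ∈ (x, y), then |x_γ − y_γ| > |x_β − y_β|. -/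

import Mathlib

open Set Filter Topology

/-- A differentiable function with nonvanishing derivative on an order-connected set
is injective there (Rolle). -/
lemma aux_injOn {S : Set ℝ} (hS : S.OrdConnected) {f f' : ℝ → ℝ}
    (hf : ∀ t ∈ S, HasDerivAt f (f' t) t) (hne : ∀ t ∈ S, f' t ≠ 0) :
    Set.InjOn f S := by
  have key : ∀ u ∈ S, ∀ v ∈ S, u < v → f u ≠ f v := by
    intro u hu v hv huv heq
    have hIcc : Set.Icc u v ⊆ S := hS.out hu hv
    obtain ⟨w, hw, hw0⟩ := exists_hasDerivAt_eq_zero huv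
      (fun t ht => (hf t (hIcc ht)).continuousAt.continuousWithinAt) heq
      (fun t ht => hf t (hIcc (Set.Ioo_subset_Icc_self ht)))
    exact hne w (hIcc (Set.Ioo_subset_Icc_self hw)) hw0
  intro u hu v hv huv
  by_contra hne2
  rcases Ne.lt_or_gt hne2 with h | h
  · exact key u hu v hv h huv
  · exact key v hv u hu h huv.symm

/-- Darboux: a nonvanishing derivative on an order-connected set has constant sign. -/
lemma aux_sign {S : Set ℝ} (hS : S.OrdConnected) {f f' : ℝ → ℝ}
    (hf : ∀ t ∈ S, HasDerivAt f (f' t) t) (hne : ∀ t ∈ S, f' t ≠ 0) :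
    ∀ u ∈ S, ∀ v ∈ S, 0 < f' u * f' v := by
  have key : ∀ u ∈ S, ∀ v ∈ S, u ≤ v → 0 < f' u * f' v := by
    intro u hu v hv huv
    have hIcc : Set.Icc u v ⊆ S := hS.out hu hv
    have hd : ∀ t ∈ Set.Icc u v, HasDerivWithinAt f (f' t) (Set.Icc u v) t :=
      fun t ht => (hf t (hIcc ht)).hasDerivWithinAt
    rcases (hne u hu).lt_or_gt with h1 | h1 <;> rcases (hne v hv).lt_or_gt with h2 | h2
    · exact mul_pos_of_neg_of_neg h1 h2
    · exfalso
      obtain ⟨w, hw, hw0⟩ := exists_hasDerivWithinAt_eq_of_gt_of_lt huv hd h1 h2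
      exact hne w (hIcc (Set.Ioo_subset_Icc_self hw)) hw0
    · exfalso
      obtain ⟨w, hw, hw0⟩ := exists_hasDerivWithinAt_eq_of_lt_of_gt huv hd h1 h2
      exact hne w (hIcc (Set.Ioo_subset_Icc_self hw)) hw0
    · exact mul_pos h1 h2
  intro u hu v hv
  rcases le_total u v with h | h
  · exact key u hu v hv h
  · rw [mul_comm]; exact key v hv u hu h

/-- Choose a sign normalizing a function of constant sign. -/
lemma aux_sign_choice {S : Set ℝ} {g : ℝ → ℝ} (hsgn : ∀ u ∈ S, ∀ v ∈ S, 0 < g u * g v)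
    {a : ℝ} (ha : a ∈ S) : ∃ ε : ℝ, (ε = 1 ∨ ε = -1) ∧ ∀ t ∈ S, 0 < ε * g t := by
  rcases lt_trichotomy (g a) 0 with h | h | h
  · refine ⟨-1, Or.inr rfl, fun t ht => ?_⟩
    have hp := hsgn a ha t ht
    by_contra hc; push_neg at hc
    nlinarith
  · exfalso
    have := hsgn a ha a ha
    rw [h] at this; simp at this
  · refine ⟨1, Or.inl rfl, fun t ht => ?_⟩
    have hp := hsgn a ha t ht
    by_contra hc; push_neg at hc
    nlinarith

/-- Derivative of an implicitly defined function: if `f (σ t) = g t` near `z`, `σ` is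
continuous at `z`, `σ z` is interior to `S`, and `f` has positive derivative on `S`,
then `σ` is differentiable at `z`. -/
lemma aux_inv {S : Set ℝ} {f f' : ℝ → ℝ}
    (hf : ∀ t ∈ S, HasDerivAt f (f' t) t) (hpos : ∀ t ∈ S, 0 < f' t)
    {σ g : ℝ → ℝ} {B z : ℝ}
    (hσc : ContinuousAt σ z) (hg : HasDerivAt g B z)
    (heq : ∀ᶠ t in 𝓝 z, σ t ∈ S ∧ f (σ t) = g t)
    (hwint : σ z ∈ interior S) :
    HasDerivAt σ (B / f' (σ z)) z := by
  classical
  have hwS : σ z ∈ S := interior_subset hwint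
  have hS' : S ∈ 𝓝 (σ z) := mem_interior_iff_mem_nhds.mp hwint
  obtain ⟨ε, hε, hball⟩ := Metric.mem_nhds_iff.mp hS'
  set w := σ z with hwdef
  have hpq : Set.Icc (w - ε/2) (w + ε/2) ⊆ S := by
    intro u hu
    apply hball
    rw [Metric.mem_ball, Real.dist_eq, abs_lt]
    constructor <;> [linarith [hu.1]; linarith [hu.2]]
  set p := w - ε/2 with hpdef
  set q := w + ε/2 with hqdef
  have hpw : p < w := by rw [hpdef]; linarith
  have hwq : w < q := by rw [hqdef]; linarith
  have hpq' : p < q := hpw.trans hwq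
  have hwm : w ∈ Set.Icc p q := ⟨hpw.le, hwq.le⟩
  have hcont : ContinuousOn f (Set.Icc p q) :=
    fun t ht => (hf t (hpq ht)).continuousAt.continuousWithinAt
  have hmono : StrictMonoOn f (Set.Icc p q) := by
    apply strictMonoOn_of_deriv_pos (convex_Icc p q) hcont
    intro t ht
    rw [interior_Icc] at ht
    rw [(hf t (hpq (Set.Ioo_subset_Icc_self ht))).deriv]
    exact hpos t (hpq (Set.Ioo_subset_Icc_self ht))
  have himage : f '' Set.Icc p q = Set.Icc (f p) (f q) := by
    apply Set.Subset.antisymm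
    · rintro v ⟨u, hu, rfl⟩
      exact ⟨hmono.monotoneOn (Set.left_mem_Icc.2 hpq'.le) hu hu.1,
        hmono.monotoneOn hu (Set.right_mem_Icc.2 hpq'.le) hu.2⟩
    · exact intermediate_value_Icc hpq'.le hcont
  set ρ := Function.invFunOn f (Set.Icc p q) with hρdef
  have hρl : ∀ u ∈ Set.Icc p q, ρ (f u) = u := fun u hu => hmono.injOn.leftInvOn_invFunOn hu
  have hρr : ∀ v ∈ Set.Icc (f p) (f q), ρ v ∈ Set.Icc p q ∧ f (ρ v) = v := by
    intro v hv
    rw [← himage] at hv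
    obtain ⟨u, hu, rfl⟩ := hv
    rw [hρl u hu]
    exact ⟨hu, rfl⟩
  have hρmono : StrictMonoOn ρ (Set.Icc (f p) (f q)) := by
    intro v1 h1 v2 h2 h12
    obtain ⟨m1, e1⟩ := hρr v1 h1
    obtain ⟨m2, e2⟩ := hρr v2 h2
    by_contra hcon; push_neg at hcon
    have := hmono.monotoneOn m2 m1 hcon
    rw [e1, e2] at this
    exact absurd h12 (not_lt.2 this)
  have hfw1 : f p < f w := hmono (Set.left_mem_Icc.2 hpq'.le) hwm hpw
  have hfw2 : f w < f q := hmono hwm (Set.right_mem_Icc.2 hpq'.le) hwq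
  have hρfw : ρ (f w) = w := hρl w hwm
  have hρcont : ContinuousAt ρ (f w) := by
    apply hρmono.continuousAt_of_image_mem_nhds (Icc_mem_nhds hfw1 hfw2)
    have himg2 : ρ '' Set.Icc (f p) (f q) = Set.Icc p q := by
      rw [← himage, hρdef]
      exact hmono.injOn.invFunOn_image (Set.Subset.refl _)
    rw [himg2, hρfw]
    exact Icc_mem_nhds hpw hwq
  have hρd : HasDerivAt ρ (f' w)⁻¹ (f w) := by
    apply HasDerivAt.of_local_left_inverse hρcont ?_ (ne_of_gt (hpos w hwS))
    · filter_upwards [Icc_mem_nhds hfw1 hfw2] with v hv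
      exact (hρr v hv).2
    · rw [hρfw]; exact hf w hwS
  have hgz : f w = g z := (heq.self_of_nhds).2
  have hcomp : HasDerivAt (ρ ∘ g) ((f' w)⁻¹ * B) z := hρd.comp_of_eq z hg hgz
  have heq2 : σ =ᶠ[𝓝 z] ρ ∘ g := by
    have hnb : σ ⁻¹' (Set.Icc p q) ∈ 𝓝 z := hσc (Icc_mem_nhds hpw hwq)
    filter_upwards [hnb, heq] with t h1 h2
    show σ t = ρ (g t)
    rw [← h2.2, hρl (σ t) h1]
  have hfin := hcomp.congr_of_eventuallyEq heq2
  rw [div_eq_inv_mul]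
  exact hfin

/-- Continuity of a strictly monotone function whose image between pairs of points
fills the whole interval. -/
lemma aux_cont {σ : ℝ → ℝ} {x y : ℝ} (hxy : x < y)
    (hmono : StrictMonoOn σ (Set.Icc x y))
    (himg : ∀ t₁ ∈ Set.Icc x y, ∀ t₂ ∈ Set.Icc x y,
      Set.uIcc (σ t₁) (σ t₂) ⊆ σ '' Set.uIcc t₁ t₂) :
    ContinuousOn σ (Set.Icc x y) := by
  have hxm : x ∈ Set.Icc x y := Set.left_mem_Icc.2 hxy.le
  have hym : y ∈ Set.Icc x y := Set.right_mem_Icc.2 hxy.le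
  intro z hz
  have hR : z < y → ContinuousWithinAt σ (Set.Ici z) z := by
    intro hzy
    have hσzy : σ z < σ y := hmono hz hym hzy
    have h1 : Set.Icc (σ z) (σ y) ⊆ σ '' Set.Icc z y := by
      have := himg z hz y hym
      rwa [Set.uIcc_of_le hzy.le, Set.uIcc_of_le hσzy.le] at this
    refine StrictMonoOn.continuousWithinAt_right_of_image_mem_nhdsWithin
      (hmono.mono (Set.Icc_subset_Icc hz.1 le_rfl))
      (Icc_mem_nhdsGE_of_mem ⟨le_rfl, hzy⟩) ?_
    exact Filter.mem_of_superset (Icc_mem_nhdsGE_of_mem ⟨le_rfl, hσzy⟩) h1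
  have hL : x < z → ContinuousWithinAt σ (Set.Iic z) z := by
    intro hxz
    have hσxz : σ x < σ z := hmono hxm hz hxz
    have h1 : Set.Icc (σ x) (σ z) ⊆ σ '' Set.Icc x z := by
      have := himg x hxm z hz
      rwa [Set.uIcc_of_le hxz.le, Set.uIcc_of_le hσxz.le] at this
    refine StrictMonoOn.continuousWithinAt_left_of_image_mem_nhdsWithin
      (hmono.mono (Set.Icc_subset_Icc le_rfl hz.2))
      (Icc_mem_nhdsLE_of_mem ⟨hxz, le_rfl⟩) ?_
    exact Filter.mem_of_superset (Icc_mem_nhdsLE_of_mem ⟨hσxz, le_rfl⟩) h1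
  rcases eq_or_lt_of_le hz.1 with h | h
  · exact (hR (h ▸ hxy)).mono (fun t ht => h ▸ ht.1)
  rcases eq_or_lt_of_le hz.2 with h2 | h2
  · exact (hL (by rw [h2]; exact hxy)).mono (fun t ht => by rw [h2]; exact ht.2)
  · exact ((hL h).union (hR h2)).mono (fun t _ => (le_total t z).elim Or.inl Or.inr)

/-- The key lemma: an increasing "proper-time" function for a timelike curve whose range
is covered by a well-parametrized curve. -/
lemma aux_key {d : ℕ} [NeZero d] {S T : Set ℝ} (hS : S.OrdConnected) (hT : T.OrdConnected)
    {c c' cs cs' : ℝ → Fin d → ℝ}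
    (hc : ∀ t ∈ S, HasDerivAt c (c' t) t)
    (hcs : ∀ t ∈ T, HasDerivAt cs (cs' t) t)
    (hwp : ∀ t ∈ S,
      (c' t 0) ^ 2 - ∑ i ∈ Finset.univ.erase (0 : Fin d), (c' t i) ^ 2 = 1)
    (htl : ∀ t ∈ T,
      ∑ i ∈ Finset.univ.erase (0 : Fin d), (cs' t i) ^ 2 < (cs' t 0) ^ 2)
    (hran : cs '' T ⊆ c '' S)
    {x y : ℝ} (hxy : x < y) (hsub : Set.Icc x y ⊆ T)
    {a b : ℝ} (ha : a ∈ S) (hb : b ∈ S) (hax : c a = cs x) (hby : c b = cs y) :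
    ∃ F : ℝ → ℝ, ContinuousOn F (Set.Icc x y) ∧ F y - F x = |a - b| ∧
      ∀ z ∈ Set.Ioo x y, HasDerivAt F
        (Real.sqrt ((cs' z 0) ^ 2 - ∑ i ∈ Finset.univ.erase (0 : Fin d), (cs' z i) ^ 2)) z := by
  classical
  have hxm : x ∈ Set.Icc x y := Set.left_mem_Icc.2 hxy.le
  have hym : y ∈ Set.Icc x y := Set.right_mem_Icc.2 hxy.le
  -- component derivatives
  have hc0 : ∀ t ∈ S, HasDerivAt (fun u => c u 0) (c' t 0) t :=
    fun t ht => (hasDerivAt_pi.1 (hc t ht)) 0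
  have hcs0 : ∀ t ∈ T, HasDerivAt (fun u => cs u 0) (cs' t 0) t :=
    fun t ht => (hasDerivAt_pi.1 (hcs t ht)) 0
  -- nonvanishing of time components
  have hc0ne : ∀ t ∈ S, c' t 0 ≠ 0 := by
    intro t ht h0
    have h1 := hwp t ht
    have h2 : (0:ℝ) ≤ ∑ i ∈ Finset.univ.erase (0 : Fin d), (c' t i) ^ 2 :=
      Finset.sum_nonneg fun i _ => sq_nonneg _
    rw [h0] at h1
    nlinarith
  have hcs0ne : ∀ t ∈ T, cs' t 0 ≠ 0 := by
    intro t ht h0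
    have h1 := htl t ht
    have h2 : (0:ℝ) ≤ ∑ i ∈ Finset.univ.erase (0 : Fin d), (cs' t i) ^ 2 :=
      Finset.sum_nonneg fun i _ => sq_nonneg _
    rw [h0] at h1
    nlinarith
  have hQpos : ∀ t ∈ T,
      0 < (cs' t 0) ^ 2 - ∑ i ∈ Finset.univ.erase (0 : Fin d), (cs' t i) ^ 2 :=
    fun t ht => sub_pos.2 (htl t ht)
  -- injectivity
  have hinj0 : Set.InjOn (fun u => c u 0) S := aux_injOn hS hc0 hc0ne
  have hinjc : Set.InjOn c S := by
    intro u hu v hv h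
    exact hinj0 hu hv (congrFun h 0)
  -- sign choices
  have hsgnc := aux_sign hS hc0 hc0ne
  have hsgncs := aux_sign hT hcs0 hcs0ne
  obtain ⟨εc, hεc1, hεc⟩ := aux_sign_choice hsgnc ha
  obtain ⟨εs, hεs1, hεs⟩ := aux_sign_choice hsgncs (hsub hxm)
  have hεcne : εc ≠ 0 := by rcases hεc1 with h | h <;> rw [h] <;> norm_num
  have hεcsq : εc * εc = 1 := by rcases hεc1 with h | h <;> rw [h] <;> norm_num
  -- scaled monotone functions
  have hc0cont : ContinuousOn (fun u => c u 0) S :=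
    fun t ht => (hc0 t ht).continuousAt.continuousWithinAt
  have hcs0cont : ContinuousOn (fun u => cs u 0) T :=
    fun t ht => (hcs0 t ht).continuousAt.continuousWithinAt
  have hMc : StrictMonoOn (fun u => εc * c u 0) S := by
    apply strictMonoOn_of_deriv_pos hS.convex (continuousOn_const.mul hc0cont)
    intro t ht
    show 0 < deriv (fun y => εc * c y 0) t
    rw [(HasDerivAt.const_mul εc (hc0 t (interior_subset ht))).deriv]
    exact hεc t (interior_subset ht)
  have hMs : StrictMonoOn (fun u => εs * cs u 0) T := by
    apply strictMonoOn_of_deriv_pos hT.convex (continuousOn_const.mul hcs0cont)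
    intro t ht
    show 0 < deriv (fun y => εs * cs y 0) t
    rw [(HasDerivAt.const_mul εs (hcs0 t (interior_subset ht))).deriv]
    exact hεs t (interior_subset ht)
  -- the reparametrization map
  set σ : ℝ → ℝ := fun t => if h : ∃ u ∈ S, c u = cs t then h.choose else 0 with hσdef
  have hσ : ∀ t ∈ Set.Icc x y, σ t ∈ S ∧ c (σ t) = cs t := by
    intro t ht
    have h : ∃ u ∈ S, c u = cs t := (Set.mem_image _ _ _).1 (hran ⟨t, hsub ht, rfl⟩)
    rw [hσdef]
    simp only [dif_pos h]
    exact ⟨h.choose_spec.1, h.choose_spec.2⟩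
  have hσx : σ x = a := by
    have h1 := hσ x hxm
    exact hinjc h1.1 ha (by rw [h1.2, hax])
  have hσy : σ y = b := by
    have h1 := hσ y hym
    exact hinjc h1.1 hb (by rw [h1.2, hby])
  -- image property via IVT
  have himg : ∀ t₁ ∈ Set.Icc x y, ∀ t₂ ∈ Set.Icc x y,
      Set.uIcc (σ t₁) (σ t₂) ⊆ σ '' Set.uIcc t₁ t₂ := by
    intro t₁ h₁ t₂ h₂ u hu
    have hσ₁ := hσ t₁ h₁
    have hσ₂ := hσ t₂ h₂
    have huS : u ∈ S := hS.uIcc_subset hσ₁.1 hσ₂.1 hu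
    have hmap : εc * c u 0 ∈ Set.uIcc (εc * c (σ t₁) 0) (εc * c (σ t₂) 0) := by
      rcases le_total (σ t₁) (σ t₂) with h | h
      · rw [Set.uIcc_of_le h] at hu
        rw [Set.uIcc_of_le (hMc.monotoneOn hσ₁.1 hσ₂.1 h)]
        exact ⟨hMc.monotoneOn hσ₁.1 huS hu.1, hMc.monotoneOn huS hσ₂.1 hu.2⟩
      · rw [Set.uIcc_of_ge h] at hu
        rw [Set.uIcc_of_ge (hMc.monotoneOn hσ₂.1 hσ₁.1 h)]
        exact ⟨hMc.monotoneOn hσ₂.1 huS hu.1, hMc.monotoneOn huS hσ₁.1 hu.2⟩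
    rw [congrFun hσ₁.2 0, congrFun hσ₂.2 0] at hmap
    have hTsub : Set.uIcc t₁ t₂ ⊆ Set.Icc x y := (Set.ordConnected_Icc).uIcc_subset h₁ h₂
    have hivt : Set.uIcc (εc * cs t₁ 0) (εc * cs t₂ 0) ⊆
        (fun t => εc * cs t 0) '' Set.uIcc t₁ t₂ := by
      exact intermediate_value_uIcc
        ((continuousOn_const.mul hcs0cont).mono (fun t ht => hsub (hTsub ht)))
    obtain ⟨t, htmem, hteq⟩ := hivt hmap
    have hσt := hσ t (hTsub htmem)
    have heqtu : σ t = u := by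
      apply hinj0 hσt.1 huS
      have h2 : cs t 0 = c u 0 := mul_left_cancel₀ hεcne hteq
      show c (σ t) 0 = c u 0
      rw [congrFun hσt.2 0, h2]
    exact ⟨t, htmem, heqtu⟩
  -- monotonicity dichotomy for σ
  have hcases : εc = εs ∨ εc = -εs := by
    rcases hεc1 with h | h <;> rcases hεs1 with h' | h' <;> rw [h, h'] <;> norm_num
  have hσm : StrictMonoOn σ (Set.Icc x y) ∨ StrictAntiOn σ (Set.Icc x y) := by
    rcases hcases with h | h
    · left
      intro t₁ h₁ t₂ h₂ h12
      have hlt : εs * cs t₁ 0 < εs * cs t₂ 0 := hMs (hsub h₁) (hsub h₂) h12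
      have hcc : εc * c (σ t₁) 0 < εc * c (σ t₂) 0 := by
        rw [congrFun (hσ t₁ h₁).2 0, congrFun (hσ t₂ h₂).2 0, h]
        exact hlt
      exact (hMc.lt_iff_lt (hσ t₁ h₁).1 (hσ t₂ h₂).1).1 hcc
    · right
      intro t₁ h₁ t₂ h₂ h12
      have hlt : εs * cs t₁ 0 < εs * cs t₂ 0 := hMs (hsub h₁) (hsub h₂) h12
      have hcc : εc * c (σ t₂) 0 < εc * c (σ t₁) 0 := by
        rw [congrFun (hσ t₁ h₁).2 0, congrFun (hσ t₂ h₂).2 0, h]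
        linarith
      exact (hMc.lt_iff_lt (hσ t₂ h₂).1 (hσ t₁ h₁).1).1 hcc
  -- continuity of σ
  have hσcont : ContinuousOn σ (Set.Icc x y) := by
    rcases hσm with hm | hm
    · exact aux_cont hxy hm himg
    · have hm' : StrictMonoOn (fun t => -σ t) (Set.Icc x y) :=
        fun t₁ h₁ t₂ h₂ h12 => neg_lt_neg (hm h₁ h₂ h12)
      have himg' : ∀ t₁ ∈ Set.Icc x y, ∀ t₂ ∈ Set.Icc x y,
          Set.uIcc (-σ t₁) (-σ t₂) ⊆ (fun t => -σ t) '' Set.uIcc t₁ t₂ := by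
        intro t₁ h₁ t₂ h₂ u hu
        have hnu : -u ∈ Set.uIcc (σ t₁) (σ t₂) := by
          rw [Set.mem_uIcc] at hu ⊢
          rcases hu with ⟨ha1, ha2⟩ | ⟨ha1, ha2⟩
          · right; constructor <;> linarith
          · left; constructor <;> linarith
        obtain ⟨t, htm, hte⟩ := himg t₁ h₁ t₂ h₂ hnu
        exact ⟨t, htm, by simp [hte]⟩
      have hcn := (aux_cont hxy hm' himg').neg
      convert hcn using 1
      funext t
      simp
  -- derivative of σ on the open interval
  have hσd : ∀ z ∈ Set.Ioo x y,
      HasDerivAt σ ((εc * cs' z 0) / (εc * c' (σ z) 0)) z := by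
    intro z hz
    have hzm : z ∈ Set.Icc x y := Set.Ioo_subset_Icc_self hz
    have hzT : z ∈ T := hsub hzm
    have hzI : Set.Icc x y ∈ 𝓝 z := Icc_mem_nhds hz.1 hz.2
    have hσcz : ContinuousAt σ z := (hσcont z hzm).continuousAt hzI
    have hwint : σ z ∈ interior S := by
      set z₁ := (x + z) / 2 with hz₁
      set z₂ := (z + y) / 2 with hz₂
      have h₁ : z₁ ∈ Set.Icc x y :=
        ⟨by rw [hz₁]; linarith [hz.1], by rw [hz₁]; linarith [hz.1, hz.2]⟩
      have h₂ : z₂ ∈ Set.Icc x y :=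
        ⟨by rw [hz₂]; linarith [hz.1, hz.2], by rw [hz₂]; linarith [hz.2]⟩
      have hz₁z : z₁ < z := by rw [hz₁]; linarith [hz.1]
      have hzz₂ : z < z₂ := by rw [hz₂]; linarith [hz.2]
      rw [mem_interior_iff_mem_nhds]
      rcases hσm with hm | hm
      · have l1 : σ z₁ < σ z := hm h₁ hzm hz₁z
        have l2 : σ z < σ z₂ := hm hzm h₂ hzz₂
        exact Filter.mem_of_superset (Ioo_mem_nhds l1 l2)
          (fun u hu => hS.out (hσ z₁ h₁).1 (hσ z₂ h₂).1 (Set.Ioo_subset_Icc_self hu))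
      · have l1 : σ z₂ < σ z := hm hzm h₂ hzz₂
        have l2 : σ z < σ z₁ := hm h₁ hzm hz₁z
        exact Filter.mem_of_superset (Ioo_mem_nhds l1 l2)
          (fun u hu => hS.out (hσ z₂ h₂).1 (hσ z₁ h₁).1 (Set.Ioo_subset_Icc_self hu))
    have heq2 : ∀ᶠ t in 𝓝 z, σ t ∈ S ∧ (fun u => εc * c u 0) (σ t) = εc * cs t 0 := by
      filter_upwards [hzI] with t ht
      refine ⟨(hσ t ht).1, ?_⟩
      show εc * c (σ t) 0 = εc * cs t 0
      rw [congrFun (hσ t ht).2 0]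
    have hgz : HasDerivAt (fun t => εc * cs t 0) (εc * cs' z 0) z :=
      HasDerivAt.const_mul εc (hcs0 z hzT)
    exact aux_inv (f := fun u => εc * c u 0) (f' := fun u => εc * c' u 0)
      (fun t ht => HasDerivAt.const_mul εc (hc0 t ht)) hεc hσcz hgz heq2 hwint
  -- the sign and length computations
  set ε := εc * εs with hεdef
  have hεabs : |ε| = 1 := by
    rcases hεc1 with h | h <;> rcases hεs1 with h' | h' <;> rw [hεdef, h, h'] <;> norm_num
  have hkey : ∀ z ∈ Set.Ioo x y,
      Real.sqrt ((cs' z 0) ^ 2 - ∑ i ∈ Finset.univ.erase (0 : Fin d), (cs' z i) ^ 2)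
        = ε * ((εc * cs' z 0) / (εc * c' (σ z) 0)) := by
    intro z hz
    have hzm : z ∈ Set.Icc x y := Set.Ioo_subset_Icc_self hz
    have hzT : z ∈ T := hsub hzm
    have hzI : Set.Icc x y ∈ 𝓝 z := Icc_mem_nhds hz.1 hz.2
    have hσzS : σ z ∈ S := (hσ z hzm).1
    set m := (εc * cs' z 0) / (εc * c' (σ z) 0) with hmdef
    have hcomp : HasDerivAt (c ∘ σ) (m • c' (σ z)) z :=
      HasDerivAt.scomp z (hc (σ z) hσzS) (hσd z hz)
    have hev : cs =ᶠ[𝓝 z] c ∘ σ := by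
      filter_upwards [hzI] with t ht
      exact ((hσ t ht).2).symm
    have hcseq : HasDerivAt cs (m • c' (σ z)) z := hcomp.congr_of_eventuallyEq hev
    have huniq : cs' z = m • c' (σ z) := (hcs z hzT).unique hcseq
    have hcompi : ∀ i, cs' z i = m * c' (σ z) i := by
      intro i; rw [huniq]; simp
    have hQm : (cs' z 0) ^ 2 - ∑ i ∈ Finset.univ.erase (0 : Fin d), (cs' z i) ^ 2
        = m ^ 2 := by
      have h2 := hwp (σ z) hσzS
      have hsum : ∑ i ∈ Finset.univ.erase (0 : Fin d), (cs' z i) ^ 2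
          = m ^ 2 * ∑ i ∈ Finset.univ.erase (0 : Fin d), (c' (σ z) i) ^ 2 := by
        rw [Finset.mul_sum]
        apply Finset.sum_congr rfl
        intro i _
        rw [hcompi i]; ring
      rw [hcompi 0, hsum]
      linear_combination (m ^ 2) * h2
    have hA : 0 < εc * c' (σ z) 0 := hεc _ hσzS
    have hB : 0 < εs * cs' z 0 := hεs z hzT
    have hmpos : 0 < ε * m := by
      rw [hεdef, hmdef]
      have hc2 : εc * εs * ((εc * cs' z 0) / (εc * c' (σ z) 0))
          = (εs * cs' z 0) * (εc * c' (σ z) 0)⁻¹ * (εc * εc) := by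
        rw [div_eq_mul_inv]; ring
      rw [hc2, hεcsq, mul_one]
      exact mul_pos hB (inv_pos.2 hA)
    rw [hQm, Real.sqrt_sq_eq_abs]
    calc |m| = |ε| * |m| := by rw [hεabs, one_mul]
    _ = |ε * m| := (abs_mul ε m).symm
    _ = ε * m := abs_of_pos hmpos
  -- assemble F
  refine ⟨fun t => ε * σ t, continuousOn_const.mul hσcont, ?_, ?_⟩
  · -- length identity; postponed below using monotonicity
    have hFd : ∀ z ∈ Set.Ioo x y, HasDerivAt (fun t => ε * σ t)
        (Real.sqrt ((cs' z 0) ^ 2 - ∑ i ∈ Finset.univ.erase (0 : Fin d), (cs' z i) ^ 2)) z := by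
      intro z hz
      rw [hkey z hz]
      exact HasDerivAt.const_mul ε (hσd z hz)
    have hFmono : StrictMonoOn (fun t => ε * σ t) (Set.Icc x y) := by
      apply strictMonoOn_of_deriv_pos (convex_Icc x y) (continuousOn_const.mul hσcont)
      intro z hz
      rw [interior_Icc] at hz
      show 0 < deriv (fun t => ε * σ t) z
      rw [(hFd z hz).deriv]
      exact Real.sqrt_pos.2 (hQpos z (hsub (Set.Ioo_subset_Icc_self hz)))
    have hFlt : ε * σ x < ε * σ y := hFmono hxm hym hxy
    have h1 : ε * σ y - ε * σ x = ε * (b - a) := by rw [hσx, hσy]; ring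
    have h2 : |ε * σ y - ε * σ x| = |b - a| := by rw [h1, abs_mul, hεabs, one_mul]
    rw [abs_sub_comm, ← h2, abs_of_pos (sub_pos.2 hFlt)]
  · intro z hz
    rw [hkey z hz]
    exact HasDerivAt.const_mul ε (hσd z hz)

/-- The main lemma behind the gravitational time dilation theorems. -/
theorem gravitational_time_dilation_main_lemma (d : ℕ) [NeZero d] (hd : 2 ≤ d)
    (Iβ Iγ I J : Set ℝ)
    (hIβ : Iβ.OrdConnected) (hIβ2 : ∃ x ∈ Iβ, ∃ y ∈ Iβ, x ≠ y)
    (hIγ : Iγ.OrdConnected) (hIγ2 : ∃ x ∈ Iγ, ∃ y ∈ Iγ, x ≠ y)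
    (hI : I.OrdConnected) (hI2 : ∃ x ∈ I, ∃ y ∈ I, x ≠ y)
    (hJ : J.OrdConnected) (hJ2 : ∃ x ∈ J, ∃ y ∈ J, x ≠ y)
    (β β' γ γ' βs βs' γs γs' : ℝ → Fin d → ℝ)
    (hβ : ∀ t ∈ Iβ, HasDerivAt β (β' t) t)
    (hγ : ∀ t ∈ Iγ, HasDerivAt γ (γ' t) t)
    (hwpβ : ∀ t ∈ Iβ,
      (β' t 0) ^ 2 - ∑ i ∈ Finset.univ.erase (0 : Fin d), (β' t i) ^ 2 = 1)
    (hwpγ : ∀ t ∈ Iγ,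
      (γ' t 0) ^ 2 - ∑ i ∈ Finset.univ.erase (0 : Fin d), (γ' t i) ^ 2 = 1)
    (hβs : ∀ t ∈ I, HasDerivAt βs (βs' t) t)
    (hγs : ∀ t ∈ J, HasDerivAt γs (γs' t) t)
    (htlβs : ∀ t ∈ I,
      ∑ i ∈ Finset.univ.erase (0 : Fin d), (βs' t i) ^ 2 < (βs' t 0) ^ 2)
    (htlγs : ∀ t ∈ J,
      ∑ i ∈ Finset.univ.erase (0 : Fin d), (γs' t i) ^ 2 < (γs' t 0) ^ 2)
    (hranβ : βs '' I ⊆ β '' Iβ) (hranγ : γs '' J ⊆ γ '' Iγ)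
    (x y : ℝ) (hxy : x < y) (hsub : Set.Icc x y ⊆ I ∩ J)
    (xβ yβ xγ yγ : ℝ)
    (hxβ : xβ ∈ Iβ) (hyβ : yβ ∈ Iβ) (hxγ : xγ ∈ Iγ) (hyγ : yγ ∈ Iγ)
    (e1 : β xβ = βs x) (e2 : β yβ = βs y) (e3 : γ xγ = γs x) (e4 : γ yγ = γs y)
    (hμ : ∀ z ∈ Set.Ioo x y,
      Real.sqrt ((βs' z 0) ^ 2 - ∑ i ∈ Finset.univ.erase (0 : Fin d), (βs' z i) ^ 2) <
      Real.sqrt ((γs' z 0) ^ 2 - ∑ i ∈ Finset.univ.erase (0 : Fin d), (γs' z i) ^ 2)) :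
    |xβ - yβ| < |xγ - yγ| := by
  obtain ⟨Fβ, hFβc, hFβe, hFβd⟩ := aux_key hIβ hI hβ hβs hwpβ htlβs hranβ hxy
    (fun t ht => (hsub ht).1) hxβ hyβ e1 e2
  obtain ⟨Fγ, hFγc, hFγe, hFγd⟩ := aux_key hIγ hJ hγ hγs hwpγ htlγs hranγ hxy
    (fun t ht => (hsub ht).2) hxγ hyγ e3 e4
  have hmono : StrictMonoOn (fun t => Fγ t - Fβ t) (Set.Icc x y) := by
    apply strictMonoOn_of_deriv_pos (convex_Icc x y) (hFγc.sub hFβc)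
    intro z hz
    rw [interior_Icc] at hz
    rw [((hFγd z hz).sub (hFβd z hz)).deriv]
    exact sub_pos.2 (hμ z hz)
  have hlt := hmono (Set.left_mem_Icc.2 hxy.le) (Set.right_mem_Icc.2 hxy.le) hxy
  simp only [] at hlt
  rw [← hFβe, ← hFγe]
  linarith
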